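/- Under hypotheses H1–H2, let (S*, V₁*, I₁*, I₂*) be an endemic equilibrium of system (3) (all four components positive, satisfying Λ − F₁(S*, I₁*) − F₂(S*, I₂*) − λS* = 0, rS* − (μ + kI₂*)V₁* = 0, F₁(S*, I₁*) − α₁I₁* = 0, F₂(S*, I₂*) + kI₂*V₁* − α₂I₂* = 0), and write the characteristic polynomial of the Jacobian matrix of system (3) at E₃ = (S*, V₁*, I₁*, I₂*) as X⁴ + c₁X³ + c₂X² + c₃X + c₄. If c₁c₂ − c₃ > 0 and c₁c₂c₃ − c₃² − c₁²c₄ > 0, then every complex eigenvalue of this Jacobian has negative real part. -/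

import Mathlib

open Polynomial

lemma rh_quartic (c₁ c₂ c₃ c₄ : ℝ) (h1 : 0 < c₁) (h4 : 0 < c₄)
    (hRH1 : 0 < c₁ * c₂ - c₃) (hRH2 : 0 < c₁ * c₂ * c₃ - c₃ ^ 2 - c₁ ^ 2 * c₄)
    (z : ℂ) (hz : z ^ 4 + c₁ * z ^ 3 + c₂ * z ^ 2 + c₃ * z + c₄ = 0) :
    z.re < 0 := by
  have h3 : 0 < c₃ := by nlinarith
  have h2 : 0 < c₂ := by nlinarith
  by_contra hre
  push_neg at hre
  by_cases him : z.im = 0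
  · -- z is real
    have hzr : z = (z.re : ℂ) := by
      apply Complex.ext <;> simp [him]
    rw [hzr] at hz
    have : ((z.re ^ 4 + c₁ * z.re ^ 3 + c₂ * z.re ^ 2 + c₃ * z.re + c₄ : ℝ) : ℂ) = 0 := by
      push_cast; linear_combination hz
    have hre0 : z.re ^ 4 + c₁ * z.re ^ 3 + c₂ * z.re ^ 2 + c₃ * z.re + c₄ = 0 :=
      mod_cast this
    nlinarith [pow_nonneg hre 4, pow_nonneg hre 3, pow_nonneg hre 2]
  · -- nonreal root; factor quartic over ℝ
    set Qr : ℝ[X] := X ^ 4 + C c₁ * X ^ 3 + C c₂ * X ^ 2 + C c₃ * X + C c₄ with hQr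
    set p : ℝ := -(2 * z.re) with hp
    set q : ℝ := Complex.normSq z with hq
    have hz0 : z ≠ 0 := fun h => him (by simp [h])
    have hqpos : 0 < q := Complex.normSq_pos.mpr hz0
    have hppos : p ≤ 0 := by simp [hp]; linarith
    have hzc : (starRingEnd ℂ z) ^ 4 + c₁ * (starRingEnd ℂ z) ^ 3 +
        c₂ * (starRingEnd ℂ z) ^ 2 + c₃ * (starRingEnd ℂ z) + c₄ = 0 := by
      have := congrArg (starRingEnd ℂ) hz
      simpa [map_add, map_mul, map_pow, Complex.conj_ofReal] using this
    have hne : z ≠ starRingEnd ℂ z := by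
      intro h
      have h2 := congrArg Complex.im h
      simp at h2
      exact him (by linarith)
    -- map of Qr
    have hmapQ : Qr.map Complex.ofRealHom =
        X ^ 4 + C (c₁ : ℂ) * X ^ 3 + C (c₂ : ℂ) * X ^ 2 + C (c₃ : ℂ) * X + C (c₄ : ℂ) := by
      simp [hQr, Polynomial.map_add, Polynomial.map_mul, Polynomial.map_pow,
        Polynomial.map_X, Polynomial.map_C]
    have hdvd1 : (X - C z) ∣ Qr.map Complex.ofRealHom := by
      rw [dvd_iff_isRoot, hmapQ]
      simp [IsRoot, eval_add, eval_mul, eval_pow]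
      linear_combination hz
    have hdvd2 : (X - C (starRingEnd ℂ z)) ∣ Qr.map Complex.ofRealHom := by
      rw [dvd_iff_isRoot, hmapQ]
      simp [IsRoot, eval_add, eval_mul, eval_pow]
      linear_combination hzc
    have hcop : IsCoprime (X - C z) (X - C (starRingEnd ℂ z)) :=
      isCoprime_X_sub_C_of_isUnit_sub (sub_ne_zero_of_ne hne).isUnit
    have hdvd : ((X ^ 2 + C p * X + C q : ℝ[X]).map Complex.ofRealHom) ∣
        Qr.map Complex.ofRealHom := by
      have hfac : (X ^ 2 + C p * X + C q : ℝ[X]).map Complex.ofRealHom =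
          (X - C z) * (X - C (starRingEnd ℂ z)) := by
        have h1 : ((p : ℝ) : ℂ) = -(z + starRingEnd ℂ z) := by
          rw [Complex.add_conj]; push_cast [hp]; ring
        have h2 : ((q : ℝ) : ℂ) = z * starRingEnd ℂ z := by
          rw [Complex.mul_conj]
        simp only [Polynomial.map_add, Polynomial.map_mul, Polynomial.map_pow,
          Polynomial.map_X, Polynomial.map_C, Complex.ofRealHom_eq_coe]
        rw [h1, h2]
        simp only [map_neg, map_add, map_sub, map_mul]
        ring
      rw [hfac]
      exact hcop.mul_dvd hdvd1 hdvd2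
    have hdvdR : (X ^ 2 + C p * X + C q : ℝ[X]) ∣ Qr := (map_dvd_map' _).mp hdvd
    obtain ⟨R, hR⟩ := hdvdR
    have hDm : (X ^ 2 + C p * X + C q : ℝ[X]).Monic := by monicity!
    have hQm : Qr.Monic := by rw [hQr]; monicity!
    have hRm : R.Monic := hDm.of_mul_monic_left (hR ▸ hQm)
    have hQdeg : Qr.natDegree = 4 := by rw [hQr]; compute_degree!
    have hDdeg : (X ^ 2 + C p * X + C q : ℝ[X]).natDegree = 2 := by compute_degree!
    have hRdeg : R.natDegree = 2 := by
      have := hQdeg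
      rw [hR, hDm.natDegree_mul hRm, hDdeg] at this
      omega
    -- R = X^2 + s X + t
    set s : ℝ := R.coeff 1 with hs
    set t : ℝ := R.coeff 0 with ht
    have hRsub : (R - X ^ 2).degree ≤ 1 := by
      rw [degree_le_iff_coeff_zero]
      intro m hm
      have hm2 : 2 ≤ m := by exact_mod_cast hm
      rcases eq_or_lt_of_le hm2 with h | h
      · have : R.coeff 2 = 1 := by
          have := hRm.coeff_natDegree
          rwa [hRdeg] at this
        simp [← h, coeff_X_pow, this]
      · have hc0 : R.coeff m = 0 := coeff_eq_zero_of_natDegree_lt (by omega)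
        have hne2 : m ≠ 2 := by omega
        simp [coeff_X_pow, hc0, hne2]
    have hRe : R = X ^ 2 + C s * X + C t := by
      have h := eq_X_add_C_of_degree_le_one hRsub
      have e1 : (R - X ^ 2).coeff 1 = s := by simp [hs, coeff_X_pow]
      have e0 : (R - X ^ 2).coeff 0 = t := by simp [ht, coeff_X_pow]
      rw [e1, e0] at h
      linear_combination h
    rw [hRe] at hR
    have hprod : Qr = X ^ 4 + C (p + s) * X ^ 3 + C (q + t + p * s) * X ^ 2 +
        C (p * t + q * s) * X + C (q * t) := by
      rw [hR]; simp only [C_add, C_mul]; ring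
    rw [hQr] at hprod
    have hv1 : c₁ = p + s := by
      have := congrArg (fun f => coeff f 3) hprod
      simpa [coeff_add, coeff_C_mul, coeff_X_pow, coeff_C, coeff_X, C_add, C_mul, add_mul, mul_assoc] using this
    have hv2 : c₂ = q + t + p * s := by
      have := congrArg (fun f => coeff f 2) hprod
      simpa [coeff_add, coeff_C_mul, coeff_X_pow, coeff_C, coeff_X, C_add, C_mul, add_mul, mul_assoc] using this
    have hv3 : c₃ = p * t + q * s := by
      have := congrArg (fun f => coeff f 1) hprod
      simpa [coeff_add, coeff_C_mul, coeff_X_pow, coeff_C, coeff_X, C_add, C_mul, add_mul, mul_assoc] using this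
    have hv4 : c₄ = q * t := by
      have := congrArg (fun f => coeff f 0) hprod
      simpa [coeff_add, coeff_C_mul, coeff_X_pow, coeff_C, coeff_X, C_add, C_mul, add_mul, mul_assoc] using this
    have htpos : 0 < t := by
      rcases lt_trichotomy t 0 with h | h | h
      · nlinarith
      · nlinarith
      · exact h
    have hspos : 0 < s := by nlinarith
    have key : c₁ * c₂ * c₃ - c₃ ^ 2 - c₁ ^ 2 * c₄ =
        p * s * ((q - t) ^ 2 + (p + s) * (p * t + q * s)) := by
      rw [hv1, hv2, hv3, hv4]; ring
    have hps : p * s ≤ 0 := mul_nonpos_of_nonpos_of_nonneg hppos hspos.le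
    have hfact : 0 < (q - t) ^ 2 + (p + s) * (p * t + q * s) := by
      rw [← hv1, ← hv3]
      nlinarith [sq_nonneg (q - t), mul_pos h1 h3]
    have hneg : p * s * ((q - t) ^ 2 + (p + s) * (p * t + q * s)) ≤ 0 :=
      mul_nonpos_of_nonpos_of_nonneg hps hfact.le
    linarith [key ▸ hRH2]

set_option maxHeartbeats 1000000 in
lemma det_fin_four_of (a b c d e f g h i j kk l m n o p : ℝ) :
    Matrix.det !![a,b,c,d; e,f,g,h; i,j,kk,l; m,n,o,p] =
      a*(f*(kk*p - l*o) - g*(j*p - l*n) + h*(j*o - kk*n))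
      - b*(e*(kk*p - l*o) - g*(i*p - l*m) + h*(i*o - kk*m))
      + c*(e*(j*p - l*n) - f*(i*p - l*m) + h*(i*n - j*m))
      - d*(e*(j*o - kk*n) - f*(i*o - kk*m) + g*(i*n - j*m)) := by
  rw [Matrix.det_succ_row_zero]
  simp [Fin.sum_univ_succ, Matrix.det_fin_three, Matrix.submatrix_apply, Fin.succAbove]
  ring

set_option maxHeartbeats 1000000 in
/-- Theorem 5.5: local stability of the endemic equilibrium
E₃ = (S*, V₁*, I₁*, I₂*) under the Routh–Hurwitz conditions c₁c₂ − c₃ > 0 and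
c₁c₂c₃ − c₃² − c₁²c₄ > 0 for the characteristic polynomial X⁴+c₁X³+c₂X²+c₃X+c₄
of the Jacobian at E₃. -/
theorem jacobian_at_E3
    (Λ r μ k α₁ α₂ lam : ℝ)
    (hΛ : 0 < Λ) (hr : 0 < r) (hμ : 0 < μ) (hk : 0 < k)
    (hα₁ : μ < α₁) (hα₂ : μ < α₂) (hlam : lam = r + μ)
    (F₁ F₂ f₁ f₂ F₁S F₁I F₂S F₂I f₁S f₁I f₂S f₂I : ℝ → ℝ → ℝ)
    (hF₁nn : ∀ S I : ℝ, 0 ≤ S → 0 ≤ I → 0 ≤ F₁ S I)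
    (hF₂nn : ∀ S I : ℝ, 0 ≤ S → 0 ≤ I → 0 ≤ F₂ S I)
    (hF₁C1 : ContDiffOn ℝ 1 (fun p : ℝ × ℝ => F₁ p.1 p.2) {p : ℝ × ℝ | 0 ≤ p.1 ∧ 0 ≤ p.2})
    (hF₂C1 : ContDiffOn ℝ 1 (fun p : ℝ × ℝ => F₂ p.1 p.2) {p : ℝ × ℝ | 0 ≤ p.1 ∧ 0 ≤ p.2})
    (hf₁C1 : ContDiffOn ℝ 1 (fun p : ℝ × ℝ => f₁ p.1 p.2) {p : ℝ × ℝ | 0 ≤ p.1 ∧ 0 ≤ p.2})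
    (hf₂C1 : ContDiffOn ℝ 1 (fun p : ℝ × ℝ => f₂ p.1 p.2) {p : ℝ × ℝ | 0 ≤ p.1 ∧ 0 ≤ p.2})
    (hH1₁ : ∀ S I : ℝ, F₁ S I = I * f₁ S I)
    (hH1₂ : ∀ S I : ℝ, F₂ S I = I * f₂ S I)
    (hF₁zero : ∀ S I : ℝ, 0 ≤ S → 0 ≤ I → F₁ 0 I = 0 ∧ F₁ S 0 = 0)
    (hF₂zero : ∀ S I : ℝ, 0 ≤ S → 0 ≤ I → F₂ 0 I = 0 ∧ F₂ S 0 = 0)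
    (hdF₁S : ∀ S I : ℝ, 0 ≤ S → 0 ≤ I → HasDerivAt (fun x => F₁ x I) (F₁S S I) S)
    (hdF₁I : ∀ S I : ℝ, 0 ≤ S → 0 ≤ I → HasDerivAt (fun y => F₁ S y) (F₁I S I) I)
    (hdF₂S : ∀ S I : ℝ, 0 ≤ S → 0 ≤ I → HasDerivAt (fun x => F₂ x I) (F₂S S I) S)
    (hdF₂I : ∀ S I : ℝ, 0 ≤ S → 0 ≤ I → HasDerivAt (fun y => F₂ S y) (F₂I S I) I)
    (hdf₁S : ∀ S I : ℝ, 0 ≤ S → 0 ≤ I → HasDerivAt (fun x => f₁ x I) (f₁S S I) S)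
    (hdf₁I : ∀ S I : ℝ, 0 ≤ S → 0 ≤ I → HasDerivAt (fun y => f₁ S y) (f₁I S I) I)
    (hdf₂S : ∀ S I : ℝ, 0 ≤ S → 0 ≤ I → HasDerivAt (fun x => f₂ x I) (f₂S S I) S)
    (hdf₂I : ∀ S I : ℝ, 0 ≤ S → 0 ≤ I → HasDerivAt (fun y => f₂ S y) (f₂I S I) I)
    (hH2f₁S : ∀ S I : ℝ, 0 ≤ S → 0 ≤ I → 0 < f₁S S I)
    (hH2f₁I : ∀ S I : ℝ, 0 ≤ S → 0 ≤ I → f₁I S I ≤ 0)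
    (hH2f₂S : ∀ S I : ℝ, 0 ≤ S → 0 ≤ I → 0 < f₂S S I)
    (hH2f₂I : ∀ S I : ℝ, 0 ≤ S → 0 ≤ I → f₂I S I ≤ 0)
    (Ss Vs Is1 Is2 : ℝ) (hSs : 0 < Ss) (hVs : 0 < Vs) (hIs1 : 0 < Is1) (hIs2 : 0 < Is2)
    (heq1 : Λ - F₁ Ss Is1 - F₂ Ss Is2 - lam * Ss = 0)
    (heq2 : r * Ss - (μ + k * Is2) * Vs = 0)
    (heq3 : F₁ Ss Is1 - α₁ * Is1 = 0)
    (heq4 : F₂ Ss Is2 + k * Is2 * Vs - α₂ * Is2 = 0)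
    (J : Matrix (Fin 4) (Fin 4) ℝ)
    (hJ : J = !![-(F₁S Ss Is1) - F₂S Ss Is2 - lam, 0, -(F₁I Ss Is1), -(F₂I Ss Is2);
                 r, -μ - k * Is2, 0, -(k * Vs);
                 F₁S Ss Is1, 0, F₁I Ss Is1 - α₁, 0;
                 F₂S Ss Is2, k * Is2, 0, F₂I Ss Is2 + k * Vs - α₂])
    (c₁ c₂ c₃ c₄ : ℝ)
    (hc : J.charpoly = X ^ 4 + C c₁ * X ^ 3 + C c₂ * X ^ 2 + C c₃ * X + C c₄)
    (hRH1 : 0 < c₁ * c₂ - c₃)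
    (hRH2 : 0 < c₁ * c₂ * c₃ - c₃ ^ 2 - c₁ ^ 2 * c₄) :
    ∀ z : ℂ, ((J.map (fun x : ℝ => (x : ℂ))).charpoly).IsRoot z → z.re < 0 := by
  subst hlam
  -- values of the partial derivatives of F at the equilibrium
  have hf1S : F₁S Ss Is1 = Is1 * f₁S Ss Is1 := by
    refine (hdF₁S Ss Is1 hSs.le hIs1.le).unique ?_
    have h := (hdf₁S Ss Is1 hSs.le hIs1.le).const_mul Is1
    simpa only [hH1₁] using h
  have hf2S : F₂S Ss Is2 = Is2 * f₂S Ss Is2 := by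
    refine (hdF₂S Ss Is2 hSs.le hIs2.le).unique ?_
    have h := (hdf₂S Ss Is2 hSs.le hIs2.le).const_mul Is2
    simpa only [hH1₂] using h
  -- equilibrium values of f₁, f₂
  have hf1 : f₁ Ss Is1 = α₁ := by
    have h3 := heq3
    rw [hH1₁] at h3
    exact mul_left_cancel₀ hIs1.ne' (by linarith)
  have hf2 : f₂ Ss Is2 = α₂ - k * Vs := by
    have h4 := heq4
    rw [hH1₂] at h4
    refine mul_left_cancel₀ hIs2.ne' ?_
    linear_combination h4
  have hf1I : F₁I Ss Is1 = α₁ + Is1 * f₁I Ss Is1 := by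
    refine (hdF₁I Ss Is1 hSs.le hIs1.le).unique ?_
    have h := (hasDerivAt_id Is1).mul (hdf₁I Ss Is1 hSs.le hIs1.le)
    simpa only [hH1₁, Pi.mul_def, id_eq, one_mul, hf1] using h
  have hf2I : F₂I Ss Is2 = (α₂ - k * Vs) + Is2 * f₂I Ss Is2 := by
    refine (hdF₂I Ss Is2 hSs.le hIs2.le).unique ?_
    have h := (hasDerivAt_id Is2).mul (hdf₂I Ss Is2 hSs.le hIs2.le)
    simpa only [hH1₂, Pi.mul_def, id_eq, one_mul, hf2] using h
  -- positivity facts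
  have hA : 0 < Is1 * f₁S Ss Is1 := mul_pos hIs1 (hH2f₁S _ _ hSs.le hIs1.le)
  have hB : 0 < Is2 * f₂S Ss Is2 := mul_pos hIs2 (hH2f₂S _ _ hSs.le hIs2.le)
  have hM1 : Is1 * f₁I Ss Is1 ≤ 0 := by nlinarith [hH2f₁I Ss Is1 hSs.le hIs1.le]
  have hM2 : Is2 * f₂I Ss Is2 ≤ 0 := by nlinarith [hH2f₂I Ss Is2 hSs.le hIs2.le]
  have hG : 0 ≤ α₂ - k * Vs := by
    have h := hF₂nn Ss Is2 hSs.le hIs2.le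
    rw [hH1₂] at h
    nlinarith [hf2]
  have hal1 : 0 < α₁ := hμ.trans hα₁
  have hal2 : 0 < α₂ := hμ.trans hα₂
  -- c₁ = -trace > 0
  have hcoeff3 : J.charpoly.coeff 3 = c₁ := by
    rw [hc]
    simp [coeff_add, coeff_C_mul, coeff_X_pow, coeff_C, coeff_X]
  have htr : J.trace = -c₁ := by
    have h := Matrix.trace_eq_neg_charpoly_coeff J
    simpa [hcoeff3] using h
  have htrexp : J.trace = (-(F₁S Ss Is1) - F₂S Ss Is2 - (r + μ)) + (-μ - k * Is2) +
      (F₁I Ss Is1 - α₁) + (F₂I Ss Is2 + k * Vs - α₂) := by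
    rw [hJ]
    simp [Matrix.trace, Matrix.diag, Fin.sum_univ_four, Matrix.cons_val_zero, Matrix.cons_val_one, Matrix.cons_val_two, Matrix.cons_val_three, Matrix.head_cons, Matrix.vecHead, Matrix.vecTail, Matrix.of_apply, Matrix.cons_val', Matrix.empty_val', Matrix.cons_val_fin_one, Function.comp]
    try ring
  have hc1 : 0 < c₁ := by
    rw [htrexp, hf1S, hf2S, hf1I, hf2I] at htr
    linarith [hA, hB, hM1, hM2, mul_pos hk hIs2, htr]
  -- c₄ = det > 0
  have hcoeff0 : J.charpoly.coeff 0 = c₄ := by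
    rw [hc]
    simp [coeff_add, coeff_C_mul, coeff_X_pow, coeff_C, coeff_X]
  have hdet : J.det = c₄ := by
    have h := Matrix.det_eq_sign_charpoly_coeff J
    norm_num [hcoeff0, Fintype.card_fin] at h
    exact h
  have hc4eq : c₄ = (Is1 * f₁S Ss Is1) * α₁ *
        ((k * Is2) * (-(Is2 * f₂I Ss Is2)) + (k * Is2) * (k * Vs) + μ * (-(Is2 * f₂I Ss Is2)))
      + (-(Is1 * f₁I Ss Is1)) *
        ((r + Is2 * f₂S Ss Is2) * (k * Is2) * α₂
          + μ * (k * Is2) * (-(Is2 * f₂I Ss Is2))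
          + μ * (k * Is2) * (k * Vs)
          + μ * (r + μ) * (-(Is2 * f₂I Ss Is2))
          + (Is2 * f₂S Ss Is2) * μ * (α₂ - k * Vs)) := by
    rw [← hdet, hJ, det_fin_four_of]
    rw [hf1S, hf2S, hf1I, hf2I]
    ring
  have hc4 : 0 < c₄ := by
    have hkI : 0 < k * Is2 := mul_pos hk hIs2
    have hkV : 0 < k * Vs := mul_pos hk hVs
    have hm2' : 0 ≤ -(Is2 * f₂I Ss Is2) := neg_nonneg.mpr hM2
    have hm1' : 0 ≤ -(Is1 * f₁I Ss Is1) := neg_nonneg.mpr hM1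
    have hT1 : 0 < (Is1 * f₁S Ss Is1) * α₁ *
        ((k * Is2) * (-(Is2 * f₂I Ss Is2)) + (k * Is2) * (k * Vs) + μ * (-(Is2 * f₂I Ss Is2))) := by
      apply mul_pos (mul_pos hA hal1)
      have h1 : 0 ≤ (k * Is2) * (-(Is2 * f₂I Ss Is2)) := mul_nonneg hkI.le hm2'
      have h2 : 0 < (k * Is2) * (k * Vs) := mul_pos hkI hkV
      have h3 : 0 ≤ μ * (-(Is2 * f₂I Ss Is2)) := mul_nonneg hμ.le hm2'
      linarith
    have hT2 : 0 ≤ (r + Is2 * f₂S Ss Is2) * (k * Is2) * α₂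
          + μ * (k * Is2) * (-(Is2 * f₂I Ss Is2))
          + μ * (k * Is2) * (k * Vs)
          + μ * (r + μ) * (-(Is2 * f₂I Ss Is2))
          + (Is2 * f₂S Ss Is2) * μ * (α₂ - k * Vs) := by
      have h1 : 0 ≤ (r + Is2 * f₂S Ss Is2) * (k * Is2) * α₂ :=
        mul_nonneg (mul_nonneg (by linarith) hkI.le) hal2.le
      have h2 : 0 ≤ μ * (k * Is2) * (-(Is2 * f₂I Ss Is2)) :=
        mul_nonneg (mul_nonneg hμ.le hkI.le) hm2'
      have h3 : 0 ≤ μ * (k * Is2) * (k * Vs) :=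
        mul_nonneg (mul_nonneg hμ.le hkI.le) hkV.le
      have h4 : 0 ≤ μ * (r + μ) * (-(Is2 * f₂I Ss Is2)) :=
        mul_nonneg (mul_nonneg hμ.le (by linarith)) hm2'
      have h5 : 0 ≤ (Is2 * f₂S Ss Is2) * μ * (α₂ - k * Vs) :=
        mul_nonneg (mul_nonneg hB.le hμ.le) hG
      linarith
    rw [hc4eq]
    have := mul_nonneg hm1' hT2
    linarith
  -- conclude via the Routh–Hurwitz quartic lemma
  intro z hz
  have hmap : (J.map (fun x : ℝ => (x : ℂ))).charpoly = J.charpoly.map Complex.ofRealHom :=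
    Matrix.charpoly_map J Complex.ofRealHom
  rw [hmap, hc] at hz
  simp only [IsRoot, Polynomial.map_add, Polynomial.map_mul, Polynomial.map_pow,
    Polynomial.map_X, Polynomial.map_C, eval_add, eval_mul, eval_pow, eval_X, eval_C,
    Complex.ofRealHom_eq_coe] at hz
  exact rh_quartic c₁ c₂ c₃ c₄ hc1 hc4 hRH1 hRH2 z (by linear_combination hz)
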